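/- If H is a graph of diameter k whose star graph G is connected and not a complete graph, then the diameter of G is at most ⌊k/2⌋ + 2. -/

import Mathlib

open SimpleGraph

/-- An induced star of `H` with center `v` and leaf set `L`: `L` is a nonempty
independent set of neighbors of `v`. -/
def IsStar {V : Type*} (H : SimpleGraph V) (v : V) (L : Set V) : Prop :=
  L.Nonempty ∧ (∀ u ∈ L, H.Adj v u) ∧ ∀ u ∈ L, ∀ w ∈ L, ¬ H.Adj u w

/-- `S` is the vertex set of an induced star of `H`. -/
def IsStarSet {V : Type*} (H : SimpleGraph V) (S : Set V) : Prop :=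
  ∃ v L, IsStar H v L ∧ S = insert v L

/-- `S` is the vertex set of a maximal induced star of `H`. -/
def IsMaxStarSet {V : Type*} (H : SimpleGraph V) (S : Set V) : Prop :=
  IsStarSet H S ∧ ∀ T, IsStarSet H T → S ⊆ T → S = T

/-- The set of (vertex sets of) maximal induced stars of `H`. -/
def maxStars {V : Type*} (H : SimpleGraph V) : Set (Set V) := {S | IsMaxStarSet H S}

/-- The star graph of `H`: the intersection graph of the maximal induced stars of `H`. -/
def starGraph {V : Type*} (H : SimpleGraph V) : SimpleGraph ↥(maxStars H) :=
  SimpleGraph.fromRel fun S T => ((S : Set V) ∩ (T : Set V)).Nonempty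

/-- Every star set is contained in a maximal star set. -/
lemma exists_maxStar_superset {V : Type*} [Fintype V] (H : SimpleGraph V) {S : Set V}
    (hS : IsStarSet H S) : ∃ T : ↥(maxStars H), S ⊆ (T : Set V) := by
  classical
  obtain ⟨M, hM, hmax⟩ := Set.Finite.exists_maximalFor id
    {T | IsStarSet H T ∧ S ⊆ T} (Set.toFinite _) ⟨S, hS, subset_rfl⟩
  refine ⟨⟨M, hM.1, fun T hT hMT => ?_⟩, hM.2⟩
  exact Set.Subset.antisymm hMT (hmax (j := T) ⟨hT, hM.2.trans hMT⟩ hMT)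

/-- Two maximal stars that intersect are at distance at most 1 in the star graph. -/
lemma dist_le_one_of_inter {V : Type*} (H : SimpleGraph V) (S T : ↥(maxStars H))
    (h : ((S : Set V) ∩ (T : Set V)).Nonempty) : (_root_.starGraph H).dist S T ≤ 1 := by
  by_cases hST : S = T
  · subst hST; simp [SimpleGraph.dist_self]
  · have hadj : (_root_.starGraph H).Adj S T := by
      simp only [_root_.starGraph, fromRel_adj]
      exact ⟨hST, Or.inl h⟩
    calc (_root_.starGraph H).dist S T ≤ hadj.toWalk.length := dist_le _
      _ = 1 := rfl

lemma key_lemma {V : Type*} [Fintype V] (H : SimpleGraph V) (hH : H.Connected)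
    (hG : (_root_.starGraph H).Connected) :
    ∀ d u w, H.dist u w = d → ∀ S T : ↥(maxStars H), u ∈ (S : Set V) → w ∈ (T : Set V) →
      (_root_.starGraph H).dist S T ≤ (d + 1) / 2 + 1 := by
  intro d
  induction d using Nat.strong_induction_on with
  | _ d IH =>
  intro u w hd S T huS hwT
  rcases Nat.lt_or_ge d 2 with hd2 | hd2
  · interval_cases d
    · -- distance 0 : u = w
      have huw : u = w := (hH.dist_eq_zero_iff).mp hd
      have : (_root_.starGraph H).dist S T ≤ 1 :=
        dist_le_one_of_inter H S T ⟨u, huS, huw ▸ hwT⟩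
      omega
    · -- distance 1 : u and w adjacent
      have hadj : H.Adj u w := SimpleGraph.dist_eq_one_iff_adj.mp hd
      have hstar : IsStarSet H (insert w {u}) := by
        refine ⟨w, {u}, ⟨⟨u, rfl⟩, ?_, ?_⟩, rfl⟩
        · intro x hx; rw [Set.mem_singleton_iff] at hx; subst hx; exact hadj.symm
        · intro x hx y hy
          rw [Set.mem_singleton_iff] at hx hy; subst hx; subst hy
          exact H.irrefl
      obtain ⟨M, hM⟩ := exists_maxStar_superset H hstar
      have huM : u ∈ (M : Set V) := hM (by simp)
      have hwM : w ∈ (M : Set V) := hM (by simp)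
      calc (_root_.starGraph H).dist S T
          ≤ (_root_.starGraph H).dist S M + (_root_.starGraph H).dist M T := hG.dist_triangle
        _ ≤ 1 + 1 := by
            gcongr
            · exact dist_le_one_of_inter H S M ⟨u, huS, huM⟩
            · exact dist_le_one_of_inter H M T ⟨w, hwM, hwT⟩
        _ ≤ (1 + 1) / 2 + 1 := by norm_num
  · -- d ≥ 2
    obtain ⟨p, hp⟩ := (hH u w).exists_walk_length_eq_dist
    rw [hd] at hp
    cases p with
    | nil => simp at hp; omega
    | cons h1 p' =>
      cases p' with
      | nil => simp at hp; omega
      | @cons _ v2 _ h2 q =>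
        rename_i v1
        -- h1 : H.Adj u v1, h2 : H.Adj v1 v2, q : Walk v2 w
        simp only [Walk.length_cons] at hp
        have hqlen : q.length = d - 2 := by omega
        have hle : H.dist v2 w ≤ d - 2 := hqlen ▸ dist_le q
        have huv2 : H.dist u v2 ≤ 2 := by
          have := dist_le (Walk.cons h1 (Walk.cons h2 Walk.nil))
          simpa using this
        have htri : H.dist u w ≤ H.dist u v2 + H.dist v2 w := hH.dist_triangle
        have hdv2 : H.dist v2 w = d - 2 := by omega
        have hne : u ≠ v2 := by
          intro h; subst h
          omega
        have hnadj : ¬ H.Adj u v2 := by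
          intro h
          have : H.dist u v2 ≤ 1 := by
            have := dist_le h.toWalk
            simpa using this
          omega
        have hstar : IsStarSet H (insert v1 {u, v2}) := by
          refine ⟨v1, {u, v2}, ⟨⟨u, Or.inl rfl⟩, ?_, ?_⟩, rfl⟩
          · rintro x (rfl | rfl)
            · exact h1.symm
            · exact h2
          · rintro x (rfl | rfl) y (rfl | rfl)
            · exact H.irrefl
            · exact hnadj
            · exact fun h => hnadj h.symm
            · exact H.irrefl
        obtain ⟨M, hM⟩ := exists_maxStar_superset H hstar
        have huM : u ∈ (M : Set V) := hM (by simp)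
        have hv2M : v2 ∈ (M : Set V) := hM (by simp)
        have hIH : (_root_.starGraph H).dist M T ≤ (d - 2 + 1) / 2 + 1 :=
          IH (d - 2) (by omega) v2 w hdv2 M T hv2M hwT
        have h1' : (_root_.starGraph H).dist S M ≤ 1 :=
          dist_le_one_of_inter H S M ⟨u, huS, huM⟩
        have := hG.dist_triangle (u := S) (v := M) (w := T)
        omega

/-- If `H` has diameter `k` and its star graph is connected and not complete, then
the star graph has diameter at most `⌊k/2⌋ + 2`. -/
theorem stmt10 {V : Type*} [Fintype V] (H : SimpleGraph V) (k : ℕ)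
    (hH : H.Connected) (hdiam : H.diam = k)
    (hGconn : (_root_.starGraph H).Connected)
    (hnc : ∃ S T : ↥(maxStars H), S ≠ T ∧ ¬ (_root_.starGraph H).Adj S T) :
    (_root_.starGraph H).diam ≤ k / 2 + 2 := by
  obtain ⟨S0, _, _⟩ := hnc
  have : Nonempty ↥(maxStars H) := ⟨S0⟩
  obtain ⟨S, T, hST⟩ := exists_dist_eq_diam (G := _root_.starGraph H)
  -- pick vertices in the stars
  obtain ⟨⟨vS, LS, _, hSeq⟩, -⟩ := S.2
  obtain ⟨⟨vT, LT, _, hTeq⟩, -⟩ := T.2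
  have huS : vS ∈ (S : Set V) := by rw [hSeq]; exact Set.mem_insert _ _
  have hwT : vT ∈ (T : Set V) := by rw [hTeq]; exact Set.mem_insert _ _
  have hVne : Nonempty V := ⟨vS⟩
  have hednt : H.ediam ≠ ⊤ := by
    obtain ⟨a, b, hab⟩ := exists_edist_eq_ediam_of_finite (G := H)
    rw [← hab]
    exact edist_ne_top_iff_reachable.mpr (hH a b)
  have hdk : H.dist vS vT ≤ k := hdiam ▸ dist_le_diam hednt
  have hkey := key_lemma H hH hGconn (H.dist vS vT) vS vT rfl S T huS hwT
  omega
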